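/- Under the edge correcting protocol on P_n (n ≥ 3, c ≥ 2), the number of initial colorings whose final coloring has exactly d defects is c^3 (c-1)^{n-d-3} * binom(n-3, d) for 0 ≤ d ≤ n-3, and 0 for d > n-3. -/

import Mathlib

/-- Number of defects (monochromatic edges) of a coloring of the path `P_n`. -/
def pathDefects (n c : ℕ) (f : Fin n → Fin c) : ℕ :=
  (Finset.univ.filter (fun i : Fin (n - 1) =>
    f ⟨i.1, by have := i.2; omega⟩ = f ⟨i.1 + 1, by have := i.2; omega⟩)).card

/-- The edge correcting protocol: each endpoint vertex that is in conflict with its unique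
neighbor changes its color to the neighbor's color plus one (mod `c`); interior vertices
keep their colors. -/
def edgeCorrect {n c : ℕ} (hn : 3 ≤ n) (hc : 2 ≤ c) (f : Fin n → Fin c) : Fin n → Fin c :=
  fun v =>
    if v.1 = 0 then
      (if f ⟨0, by omega⟩ = f ⟨1, by omega⟩ then f ⟨1, by omega⟩ + ⟨1, by omega⟩ else f v)
    else if v.1 = n - 1 then
      (if f ⟨n - 1, by omega⟩ = f ⟨n - 2, by omega⟩ then f ⟨n - 2, by omega⟩ + ⟨1, by omega⟩
       else f v)
    else f v

section AuxLemmas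
variable {n c : ℕ}

lemma ec_interior (hn : 3 ≤ n) (hc : 2 ≤ c) (f : Fin n → Fin c) (v : Fin n)
    (h0 : ¬ v.1 = 0) (h1 : ¬ v.1 = n - 1) : edgeCorrect hn hc f v = f v := by
  unfold edgeCorrect
  rw [if_neg h0, if_neg h1]

lemma fin_add_one_ne (hc : 2 ≤ c) (x : Fin c) (h1 : 1 < c) : x + ⟨1, h1⟩ ≠ x := by
  haveI : NeZero c := ⟨by omega⟩
  intro h
  have h2 : x + (⟨1, h1⟩ : Fin c) = x + 0 := by simpa using h
  have h3 := add_left_cancel h2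
  have := congrArg Fin.val h3
  simp [Fin.val_zero] at this

lemma ec_left (hn : 3 ≤ n) (hc : 2 ≤ c) (f : Fin n → Fin c) (h0 : 0 < n) (h1 : 1 < n) :
    edgeCorrect hn hc f ⟨0, h0⟩ ≠ edgeCorrect hn hc f ⟨1, h1⟩ := by
  rw [ec_interior hn hc f ⟨1, h1⟩ (by simp) (by simp; omega)]
  unfold edgeCorrect
  split_ifs with hv h h2 h3
  · exact fin_add_one_ne hc _ (by omega)
  · exact h
  · exact absurd rfl hv
  · exact absurd rfl hv
  · exact absurd rfl hv

lemma ec_right (hn : 3 ≤ n) (hc : 2 ≤ c) (f : Fin n → Fin c) (ha : n - 2 < n) (hb : n - 1 < n) :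
    edgeCorrect hn hc f ⟨n - 2, ha⟩ ≠ edgeCorrect hn hc f ⟨n - 1, hb⟩ := by
  rw [ec_interior hn hc f ⟨n - 2, ha⟩ (by simp; omega) (by simp; omega)]
  unfold edgeCorrect
  split_ifs with hv h h2 h3
  · simp at hv; omega
  · simp at hv; omega
  · intro hcon
    exact fin_add_one_ne hc _ (by omega) hcon.symm
  · intro hcon
    exact h3 hcon.symm
  · exact absurd rfl h2

def Fd (hn : 3 ≤ n) (hc : 2 ≤ c) (f : Fin n → Fin c) (k : ℕ) : ℕ :=
  if h : k + 1 < n then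
    (if edgeCorrect hn hc f ⟨k, by omega⟩ = edgeCorrect hn hc f ⟨k + 1, h⟩ then 1 else 0)
  else 0

def Gd (hn : 3 ≤ n) (f : Fin n → Fin c) (k : ℕ) : ℕ :=
  if h : k < n - 3 then
    (if f ⟨k + 1, by omega⟩ = f ⟨k + 2, by omega⟩ then 1 else 0)
  else 0

lemma Fd_zero (hn : 3 ≤ n) (hc : 2 ≤ c) (f : Fin n → Fin c) : Fd hn hc f 0 = 0 := by
  unfold Fd
  rw [dif_pos (by omega : 0 + 1 < n)]
  rw [if_neg (ec_left hn hc f (by omega) (by omega))]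

lemma Fd_last (hn : 3 ≤ n) (hc : 2 ≤ c) (f : Fin n → Fin c) : Fd hn hc f (n - 3 + 1) = 0 := by
  unfold Fd
  rw [dif_pos (by omega : n - 3 + 1 + 1 < n)]
  have e1 : (⟨n - 3 + 1, by omega⟩ : Fin n) = ⟨n - 2, by omega⟩ :=
    Fin.ext (by simp only [Fin.val_mk]; omega)
  have e2 : (⟨n - 3 + 1 + 1, by omega⟩ : Fin n) = ⟨n - 1, by omega⟩ :=
    Fin.ext (by simp only [Fin.val_mk]; omega)
  rw [e1, e2, if_neg (ec_right hn hc f (by omega) (by omega))]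

lemma Fd_mid (hn : 3 ≤ n) (hc : 2 ≤ c) (f : Fin n → Fin c) (k : ℕ) (hk : k < n - 3) :
    Fd hn hc f (k + 1) = Gd hn f k := by
  unfold Fd Gd
  rw [dif_pos (by omega : k + 1 + 1 < n), dif_pos hk]
  rw [ec_interior hn hc f ⟨k + 1, by omega⟩ (by simp only [Fin.val_mk]; omega)
        (by simp only [Fin.val_mk]; omega),
      ec_interior hn hc f ⟨k + 1 + 1, by omega⟩ (by simp only [Fin.val_mk]; omega)
        (by simp only [Fin.val_mk]; omega)]

lemma defect_eq (hn : 3 ≤ n) (hc : 2 ≤ c) (f : Fin n → Fin c) :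
    pathDefects n c (edgeCorrect hn hc f) =
    (Finset.univ.filter fun i : Fin (n - 3) =>
       f ⟨i.1 + 1, by have := i.2; omega⟩ = f ⟨i.1 + 2, by have := i.2; omega⟩).card := by
  have hL : pathDefects n c (edgeCorrect hn hc f) = ∑ k ∈ Finset.range (n - 1), Fd hn hc f k := by
    unfold pathDefects
    rw [Finset.card_filter, ← Fin.sum_univ_eq_sum_range (fun k => Fd hn hc f k) (n - 1)]
    apply Finset.sum_congr rfl
    intro i _
    have hi2 := i.2
    unfold Fd
    rw [dif_pos (by omega : i.1 + 1 < n)]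
  have hR : (Finset.univ.filter fun i : Fin (n - 3) =>
       f ⟨i.1 + 1, by have := i.2; omega⟩ = f ⟨i.1 + 2, by have := i.2; omega⟩).card
      = ∑ k ∈ Finset.range (n - 3), Gd hn f k := by
    rw [Finset.card_filter, ← Fin.sum_univ_eq_sum_range (fun k => Gd hn f k) (n - 3)]
    apply Finset.sum_congr rfl
    intro i _
    have hi2 := i.2
    unfold Gd
    rw [dif_pos hi2]
  rw [hL, hR]
  have h1 : n - 1 = (n - 2) + 1 := by omega
  have h2 : n - 2 = (n - 3) + 1 := by omega
  rw [h1, Finset.sum_range_succ', h2, Finset.sum_range_succ]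
  rw [Fd_zero hn hc f, Fd_last hn hc f]
  have hmid : ∀ k ∈ Finset.range (n - 3), Fd hn hc f (k + 1) = Gd hn f k := by
    intro k hk
    exact Fd_mid hn hc f k (Finset.mem_range.mp hk)
  rw [Finset.sum_congr rfl hmid]
  simp

def psiAux {c : ℕ} (x : Fin c) (δ : ℕ → Fin c) : ℕ → Fin c
  | 0 => x
  | k + 1 => psiAux x δ k + δ k

def phiFun (hn : 3 ≤ n) (f : Fin n → Fin c) :
    Fin c × Fin c × Fin c × (Fin (n - 3) → Fin c) :=
  (f ⟨0, by omega⟩, f ⟨n - 1, by omega⟩, f ⟨1, by omega⟩,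
    fun i => f ⟨i.1 + 2, by have := i.2; omega⟩ - f ⟨i.1 + 1, by have := i.2; omega⟩)

def psiFun (hn : 3 ≤ n) [NeZero c] (p : Fin c × Fin c × Fin c × (Fin (n - 3) → Fin c)) :
    Fin n → Fin c :=
  fun v => if v.1 = 0 then p.1 else if v.1 = n - 1 then p.2.1
    else psiAux p.2.2.1 (fun k => if h : k < n - 3 then p.2.2.2 ⟨k, h⟩ else 0) (v.1 - 1)

lemma phi_psi (hn : 3 ≤ n) [NeZero c] (p : Fin c × Fin c × Fin c × (Fin (n - 3) → Fin c)) :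
    phiFun hn (psiFun hn p) = p := by
  obtain ⟨a, b, x, δ⟩ := p
  unfold phiFun psiFun
  refine Prod.ext ?_ (Prod.ext ?_ (Prod.ext ?_ ?_))
  · simp
  · show (if n - 1 = 0 then a else if n - 1 = n - 1 then b else _) = b
    rw [if_neg (by omega), if_pos rfl]
  · show (if 1 = 0 then a else if 1 = n - 1 then b else _) = x
    rw [if_neg (by omega), if_neg (by omega)]
    rfl
  · funext i
    have hi2 := i.2
    show (if i.1 + 2 = 0 then a else if i.1 + 2 = n - 1 then b else _)
        - (if i.1 + 1 = 0 then a else if i.1 + 1 = n - 1 then b else _) = δ i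
    rw [if_neg (by omega), if_neg (by omega), if_neg (by omega), if_neg (by omega)]
    have e1 : i.1 + 2 - 1 = i.1 + 1 := by omega
    have e2 : i.1 + 1 - 1 = i.1 := by omega
    rw [e1, e2]
    show psiAux x _ i.1 + _ - psiAux x _ i.1 = δ i
    rw [add_sub_cancel_left]
    simp [dif_pos hi2]

lemma phi_inj (hn : 3 ≤ n) (hc : 2 ≤ c) :
    Function.Injective (phiFun (n := n) (c := c) hn) := by
  haveI : NeZero c := ⟨by omega⟩
  intro f f' h
  unfold phiFun at h
  rw [Prod.ext_iff, Prod.ext_iff, Prod.ext_iff] at h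
  obtain ⟨h1, h2, h3, h4⟩ := h
  simp only at h1 h2 h3 h4
  have key : ∀ k : ℕ, ∀ hk : k + 1 < n, k + 1 ≤ n - 2 → f ⟨k + 1, hk⟩ = f' ⟨k + 1, hk⟩ := by
    intro k
    induction k with
    | zero => intro hk _; exact h3
    | succ m ih =>
      intro hk hle
      have hm : m < n - 3 := by omega
      have h4m := congrFun h4 ⟨m, hm⟩
      simp only at h4m
      have ihm := ih (by omega) (by omega)
      have h4m' : f ⟨m + 1 + 1, hk⟩ - f ⟨m + 1, by omega⟩
          = f' ⟨m + 1 + 1, hk⟩ - f' ⟨m + 1, by omega⟩ := h4m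
      rw [ihm] at h4m'
      exact sub_left_inj.mp h4m'
  funext v
  have hv2 := v.2
  rcases Nat.eq_or_lt_of_le (Nat.zero_le v.1) with h0 | h0
  · have hv : v = ⟨0, by omega⟩ := Fin.ext (by simp only [Fin.val_mk]; omega)
    rw [hv]; exact h1
  · rcases eq_or_ne v.1 (n - 1) with hl | hl
    · have hv : v = ⟨n - 1, by omega⟩ := Fin.ext (by simp only [Fin.val_mk]; omega)
      rw [hv]; exact h2
    · have hv : v = ⟨(v.1 - 1) + 1, by omega⟩ := Fin.ext (by simp only [Fin.val_mk]; omega)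
      rw [hv]
      exact key (v.1 - 1) (by omega) (by omega)


end AuxLemmas

lemma card_filter_prod_snd {A B : Type*} [Fintype A] [Fintype B] (Q : B → Prop)
    [DecidablePred Q] [DecidableEq A] [DecidableEq B] :
    (Finset.univ.filter fun p : A × B => Q p.2).card
      = Fintype.card A * (Finset.univ.filter Q).card := by
  rw [← Finset.card_univ, ← Finset.card_product]
  congr 1
  ext p
  simp

def consE (m c : ℕ) : (Fin (m + 1) → Fin c) ≃ Fin c × (Fin m → Fin c) where
  toFun δ := (δ 0, fun i => δ i.succ)
  invFun p := Fin.cons p.1 p.2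
  left_inv δ := Fin.cons_self_tail δ
  right_inv p := by
    ext
    · simp
    · simp

lemma countZeros (c : ℕ) [NeZero c] :
    ∀ m d : ℕ, (Finset.univ.filter fun δ : Fin m → Fin c =>
        (Finset.univ.filter fun i => δ i = 0).card = d).card
      = Nat.choose m d * (c - 1) ^ (m - d) := by
  intro m
  induction m with
  | zero =>
    intro d
    rcases d with _ | e
    · simp
    · simp
  | succ m ih =>
    intro d
    have key : ∀ δ : Fin (m + 1) → Fin c,
        (Finset.univ.filter fun i => δ i = 0).card
          = (if δ 0 = 0 then 1 else 0)
            + (Finset.univ.filter fun i : Fin m => δ i.succ = 0).card := by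
      intro δ
      rw [Finset.card_filter, Fin.sum_univ_succ, Finset.card_filter]
    have hcard : (Finset.univ.filter fun δ : Fin (m + 1) → Fin c =>
        (Finset.univ.filter fun i => δ i = 0).card = d).card
        = (Finset.univ.filter fun p : Fin c × (Fin m → Fin c) =>
            ((if p.1 = 0 then 1 else 0)
              + (Finset.univ.filter fun i : Fin m => p.2 i = 0).card) = d).card := by
      apply Finset.card_equiv (consE m c)
      intro δ
      simp only [Finset.mem_filter, Finset.mem_univ, true_and, consE, Equiv.coe_fn_mk]
      rw [key δ]
      exact Iff.rfl
    rw [hcard, Finset.card_filter, Fintype.sum_prod_type]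
    clear hcard
    have hx : ∀ x : Fin c,
        (∑ δ : Fin m → Fin c, if ((if x = 0 then 1 else 0)
            + (Finset.univ.filter fun i : Fin m => δ i = 0).card) = d then 1 else 0)
        = if x = 0
          then (∑ δ : Fin m → Fin c,
              if 1 + (Finset.univ.filter fun i : Fin m => δ i = 0).card = d then 1 else 0)
          else (∑ δ : Fin m → Fin c,
              if (Finset.univ.filter fun i : Fin m => δ i = 0).card = d then 1 else 0) := by
      intro x
      split_ifs with h <;> simp [h]
    rw [Finset.sum_congr rfl fun x _ => hx x]
    have c1 : (Finset.univ.filter fun x : Fin c => x = 0).card = 1 := by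
      rw [Finset.filter_eq']
      simp
    have c2 : (Finset.univ.filter fun x : Fin c => ¬ x = 0).card = c - 1 := by
      rw [Finset.filter_not, Finset.card_sdiff_of_subset (Finset.filter_subset _ _), c1]
      simp
    rw [Finset.sum_ite, Finset.sum_const, Finset.sum_const, c1, c2, one_smul, smul_eq_mul]
    have hB : ∀ d' : ℕ, (∑ δ : Fin m → Fin c,
        if (Finset.univ.filter fun i : Fin m => δ i = 0).card = d' then 1 else 0)
        = Nat.choose m d' * (c - 1) ^ (m - d') :=
      fun d' => (Finset.card_filter _ _).symm.trans (ih d')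
    rcases d with _ | e
    · have hA : (∑ δ : Fin m → Fin c,
          if 1 + (Finset.univ.filter fun i : Fin m => δ i = 0).card = 0 then 1 else 0) = 0 := by
        apply Finset.sum_eq_zero
        intro δ _
        exact if_neg (by omega)
      rw [hA, hB 0]
      clear hA
      simp [pow_succ, Nat.mul_comm]
    · have hA : (∑ δ : Fin m → Fin c,
          if 1 + (Finset.univ.filter fun i : Fin m => δ i = 0).card = e + 1 then 1 else 0)
          = Nat.choose m e * (c - 1) ^ (m - e) := by
        have hcong : ∀ δ : Fin m → Fin c,
            (if 1 + (Finset.univ.filter fun i : Fin m => δ i = 0).card = e + 1 then 1 else 0)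
            = (if (Finset.univ.filter fun i : Fin m => δ i = 0).card = e then 1 else 0) :=
          fun δ => if_congr (by constructor <;> (intro h; omega)) rfl rfl
        rw [Finset.sum_congr rfl fun δ _ => hcong δ]
        exact hB e
      rw [hA, hB (e + 1)]
      clear hA
      rcases Nat.lt_or_ge e m with he | he
      · have e1 : m - e = (m - (e + 1)) + 1 := by omega
        have e2 : m + 1 - (e + 1) = m - e := by omega
        rw [e2, e1, pow_succ, Nat.choose_succ_succ]
        ring
      · rcases Nat.eq_or_lt_of_le he with he' | he'
        · subst he'
          simp [Nat.choose_self, Nat.choose_succ_self, Nat.sub_self]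
        · rw [Nat.choose_eq_zero_of_lt (by omega), Nat.choose_eq_zero_of_lt (by omega),
            Nat.choose_eq_zero_of_lt (by omega)]
          simp

theorem stmt7 (n c d : ℕ) (hn : 3 ≤ n) (hc : 2 ≤ c) :
    (d ≤ n - 3 →
      (Finset.univ.filter
          (fun f : Fin n → Fin c => pathDefects n c (edgeCorrect hn hc f) = d)).card
        = c ^ 3 * (c - 1) ^ (n - d - 3) * Nat.choose (n - 3) d) ∧
    (n - 3 < d →
      (Finset.univ.filter
          (fun f : Fin n → Fin c => pathDefects n c (edgeCorrect hn hc f) = d)).card = 0) := by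
  haveI : NeZero c := ⟨by omega⟩
  have hflt : ∀ f : Fin n → Fin c,
      (Finset.univ.filter fun i : Fin (n - 3) => (phiFun hn f).2.2.2 i = 0)
        = (Finset.univ.filter fun i : Fin (n - 3) =>
            f ⟨i.1 + 1, by have := i.2; omega⟩ = f ⟨i.1 + 2, by have := i.2; omega⟩) := by
    intro f
    apply Finset.filter_congr
    intro i _
    show ((phiFun hn f).2.2.2 i = 0) ↔ _
    unfold phiFun
    exact sub_eq_zero.trans eq_comm
  constructor
  · intro hd
    have hbij : (Finset.univ.filter
        (fun f : Fin n → Fin c => pathDefects n c (edgeCorrect hn hc f) = d)).card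
        = (Finset.univ.filter fun p : Fin c × Fin c × Fin c × (Fin (n - 3) → Fin c) =>
            (Finset.univ.filter fun i : Fin (n - 3) => p.2.2.2 i = 0).card = d).card := by
      apply Finset.card_bij (fun f _ => phiFun hn f)
      · intro f hf
        simp only [Finset.mem_filter, Finset.mem_univ, true_and] at hf ⊢
        rw [defect_eq hn hc f] at hf
        rw [hflt f]
        exact hf
      · intro f hf f' hf' h
        exact phi_inj hn hc h
      · intro p hp
        simp only [Finset.mem_filter, Finset.mem_univ, true_and] at hp
        refine ⟨psiFun hn p, ?_, phi_psi hn p⟩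
        simp only [Finset.mem_filter, Finset.mem_univ, true_and]
        rw [← phi_psi hn p] at hp
        rw [hflt (psiFun hn p)] at hp
        rw [defect_eq hn hc (psiFun hn p)]
        exact hp
    rw [hbij]
    rw [card_filter_prod_snd
      (Q := fun q : Fin c × Fin c × (Fin (n - 3) → Fin c) =>
        (Finset.univ.filter fun i : Fin (n - 3) => q.2.2 i = 0).card = d)]
    rw [card_filter_prod_snd
      (Q := fun q : Fin c × (Fin (n - 3) → Fin c) =>
        (Finset.univ.filter fun i : Fin (n - 3) => q.2 i = 0).card = d)]
    rw [card_filter_prod_snd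
      (Q := fun q : Fin (n - 3) → Fin c =>
        (Finset.univ.filter fun i : Fin (n - 3) => q i = 0).card = d)]
    rw [countZeros c (n - 3) d, Fintype.card_fin]
    have e1 : n - 3 - d = n - d - 3 := by omega
    rw [e1]
    ring
  · intro hd
    have hem : ∀ f ∈ (Finset.univ : Finset (Fin n → Fin c)),
        ¬ pathDefects n c (edgeCorrect hn hc f) = d := by
      intro f _ h
      rw [defect_eq hn hc f] at h
      have hle := Finset.card_filter_le (Finset.univ : Finset (Fin (n - 3)))
        (fun i : Fin (n - 3) =>
          f ⟨i.1 + 1, by have := i.2; omega⟩ = f ⟨i.1 + 2, by have := i.2; omega⟩)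
      rw [h] at hle
      simp only [Finset.card_univ, Fintype.card_fin] at hle
      omega
    rw [Finset.filter_false_of_mem hem, Finset.card_empty]
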